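/- Let H₀ = diag(a₁, a₂, a₃) be a real diagonal 3×3 matrix that is strongly regular, and let H₁ be the 3×3 Hermitian matrix with zero diagonal, entries (H₁)₁₂ = b₁ ≠ 0, (H₁)₂₃ = b₂ ≠ 0, and (H₁)₁₃ = 0 (with conjugate entries below the diagonal). If M is a 3×3 complex matrix such that Tr(M · Ad^m_{−iH₀}(−iH₁)) = 0 for every nonnegative integer m, then the (1,2), (2,1), (2,3) and (3,2) entries of M are all zero. -/
import Mathlib


open Matrix Complex

/-- `Ad^m_{-iH₀}(-iH₁)`: the `m`-fold iterate of `X ↦ [-iH₀, X]` applied to `-iH₁`. -/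
noncomputable def adIter {n : ℕ} (H₀ H₁ : Matrix (Fin n) (Fin n) ℂ) (m : ℕ) :
    Matrix (Fin n) (Fin n) ℂ :=
  (fun X : Matrix (Fin n) (Fin n) ℂ =>
      ((-Complex.I) • H₀) * X - X * ((-Complex.I) • H₀))^[m] ((-Complex.I) • H₁)

lemma adIter_apply (a : Fin 3 → ℝ) (H₁ : Matrix (Fin 3) (Fin 3) ℂ) (m : ℕ) (k j : Fin 3) :
    adIter (Matrix.diagonal fun i => (a i : ℂ)) H₁ m k j
      = (-Complex.I) ^ (m + 1) * ((a k : ℂ) - (a j : ℂ)) ^ m * H₁ k j := by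
  induction m with
  | zero => simp [adIter]
  | succ m ih =>
    have h : adIter (Matrix.diagonal fun i => (a i : ℂ)) H₁ (m + 1)
        = ((-Complex.I) • (Matrix.diagonal fun i => (a i : ℂ)))
            * adIter (Matrix.diagonal fun i => (a i : ℂ)) H₁ m
          - adIter (Matrix.diagonal fun i => (a i : ℂ)) H₁ m
            * ((-Complex.I) • (Matrix.diagonal fun i => (a i : ℂ))) := by
      simp only [adIter, Function.iterate_succ_apply']
    rw [h]
    simp only [Matrix.sub_apply, Matrix.smul_mul, Matrix.mul_smul, Matrix.smul_apply,
      Matrix.diagonal_mul, Matrix.mul_diagonal, smul_eq_mul, ih]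
    ring

lemma vand4 {c₀ c₁ c₂ c₃ x₀ x₁ x₂ x₃ : ℂ}
    (h01 : x₀ ≠ x₁) (h02 : x₀ ≠ x₂) (h03 : x₀ ≠ x₃)
    (h12 : x₁ ≠ x₂) (h13 : x₁ ≠ x₃) (h23 : x₂ ≠ x₃)
    (e : ∀ m : ℕ, c₀ * x₀ ^ m + c₁ * x₁ ^ m + c₂ * x₂ ^ m + c₃ * x₃ ^ m = 0) :
    c₀ = 0 ∧ c₁ = 0 ∧ c₂ = 0 ∧ c₃ = 0 := by
  have e0 := e 0; have e1 := e 1; have e2 := e 2; have e3 := e 3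
  simp only [pow_zero, pow_one, mul_one] at e0 e1 e2 e3
  have d01 := sub_ne_zero.mpr h01
  have d02 := sub_ne_zero.mpr h02
  have d03 := sub_ne_zero.mpr h03
  have d12 := sub_ne_zero.mpr h12
  have d13 := sub_ne_zero.mpr h13
  have d23 := sub_ne_zero.mpr h23
  have hc0 : c₀ * ((x₀ - x₁) * ((x₀ - x₂) * (x₀ - x₃))) = 0 := by
    linear_combination e3 - (x₁ + x₂ + x₃) * e2 + (x₁*x₂ + x₁*x₃ + x₂*x₃) * e1
      - x₁*x₂*x₃ * e0
  have hc1 : c₁ * ((x₁ - x₀) * ((x₁ - x₂) * (x₁ - x₃))) = 0 := by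
    linear_combination e3 - (x₀ + x₂ + x₃) * e2 + (x₀*x₂ + x₀*x₃ + x₂*x₃) * e1
      - x₀*x₂*x₃ * e0
  have hc2 : c₂ * ((x₂ - x₀) * ((x₂ - x₁) * (x₂ - x₃))) = 0 := by
    linear_combination e3 - (x₀ + x₁ + x₃) * e2 + (x₀*x₁ + x₀*x₃ + x₁*x₃) * e1
      - x₀*x₁*x₃ * e0
  have hc3 : c₃ * ((x₃ - x₀) * ((x₃ - x₁) * (x₃ - x₂))) = 0 := by
    linear_combination e3 - (x₀ + x₁ + x₂) * e2 + (x₀*x₁ + x₀*x₂ + x₁*x₂) * e1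
      - x₀*x₁*x₂ * e0
  refine ⟨?_, ?_, ?_, ?_⟩
  · rcases mul_eq_zero.mp hc0 with h | h
    · exact h
    · exact absurd h (by
        simp [mul_eq_zero, d01, d02, d03])
  · rcases mul_eq_zero.mp hc1 with h | h
    · exact h
    · exact absurd h (by
        simp [mul_eq_zero, sub_ne_zero.mpr h01.symm, d12, d13, sub_eq_zero])
  · rcases mul_eq_zero.mp hc2 with h | h
    · exact h
    · exact absurd h (by
        simp [mul_eq_zero, sub_eq_zero, h02.symm, h12.symm, h23])
  · rcases mul_eq_zero.mp hc3 with h | h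
    · exact h
    · exact absurd h (by
        simp [mul_eq_zero, sub_eq_zero, h03.symm, h13.symm, h23.symm])

/-- For `H₀ = diag(a₁,a₂,a₃)` strongly regular and `H₁` Hermitian with
zero diagonal, `(H₁)₁₂ = b₁ ≠ 0`, `(H₁)₂₃ = b₂ ≠ 0`, `(H₁)₁₃ = 0`, any matrix `M`
with `Tr(M · Ad^m_{-iH₀}(-iH₁)) = 0` for all `m ≥ 0` has vanishing `(1,2)`, `(2,1)`,
`(2,3)` and `(3,2)` entries. -/
theorem stmt15 (a : Fin 3 → ℝ)
    (hreg : ∀ k ℓ p q : Fin 3, k ≠ ℓ → p ≠ q →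
      a ℓ - a k = a q - a p → k = p ∧ ℓ = q)
    (H₁ : Matrix (Fin 3) (Fin 3) ℂ) (hH₁ : H₁.IsHermitian)
    (hH₁diag : ∀ k : Fin 3, H₁ k k = 0)
    (b₁ b₂ : ℂ) (hb₁ : b₁ ≠ 0) (hb₂ : b₂ ≠ 0)
    (h12 : H₁ 0 1 = b₁) (h23 : H₁ 1 2 = b₂) (h13 : H₁ 0 2 = 0)
    (M : Matrix (Fin 3) (Fin 3) ℂ)
    (hM : ∀ m : ℕ,
      Matrix.trace (M * adIter (Matrix.diagonal fun i => (a i : ℂ)) H₁ m) = 0) :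
    M 0 1 = 0 ∧ M 1 0 = 0 ∧ M 1 2 = 0 ∧ M 2 1 = 0 := by
  -- Conjugate entries of H₁
  have h21 : H₁ 1 0 = star b₁ := by
    rw [← h12]; exact (hH₁.apply 1 0).symm
  have h32 : H₁ 2 1 = star b₂ := by
    rw [← h23]; exact (hH₁.apply 2 1).symm
  have h31 : H₁ 2 0 = 0 := by
    have : H₁ 2 0 = star (H₁ 0 2) := (hH₁.apply 2 0).symm
    rw [this, h13, star_zero]
  -- The moment equations
  set x₀ : ℂ := (a 0 : ℂ) - (a 1 : ℂ) with hx₀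
  set x₁ : ℂ := (a 1 : ℂ) - (a 0 : ℂ) with hx₁
  set x₂ : ℂ := (a 1 : ℂ) - (a 2 : ℂ) with hx₂
  set x₃ : ℂ := (a 2 : ℂ) - (a 1 : ℂ) with hx₃
  have key : ∀ m : ℕ,
      (M 1 0 * b₁) * x₀ ^ m + (M 0 1 * star b₁) * x₁ ^ m
        + (M 2 1 * b₂) * x₂ ^ m + (M 1 2 * star b₂) * x₃ ^ m = 0 := by
    intro m
    have h := hM m
    have hI : (-Complex.I) ^ (m + 1) ≠ 0 := by
      apply pow_ne_zero
      simp [Complex.I_ne_zero]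
    rw [Matrix.trace] at h
    simp only [Matrix.diag, Matrix.mul_apply, Fin.sum_univ_three, adIter_apply,
      hH₁diag, h12, h23, h13, h21, h32, h31, mul_zero, zero_mul, add_zero,
      zero_add, mul_one] at h
    have h' := mul_eq_zero.mp (by linear_combination h :
      (-Complex.I) ^ (m + 1) *
        ((M 1 0 * b₁) * x₀ ^ m + (M 0 1 * star b₁) * x₁ ^ m
          + (M 2 1 * b₂) * x₂ ^ m + (M 1 2 * star b₂) * x₃ ^ m) = 0)
    rcases h' with h' | h'
    · exact absurd h' hI
    · exact h'
  -- distinctness of the frequencies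
  have freq : ∀ k ℓ p q : Fin 3, k ≠ ℓ → p ≠ q → ¬(k = p ∧ ℓ = q) →
      (a ℓ : ℂ) - (a k : ℂ) ≠ (a q : ℂ) - (a p : ℂ) := by
    intro k ℓ p q hkl hpq hne h
    apply hne
    apply hreg k ℓ p q hkl hpq
    have : ((a ℓ - a k : ℝ) : ℂ) = ((a q - a p : ℝ) : ℂ) := by push_cast; linear_combination h
    exact_mod_cast this
  have h01 : x₀ ≠ x₁ := freq 1 0 0 1 (by decide) (by decide) (by decide)
  have h02 : x₀ ≠ x₂ := freq 1 0 2 1 (by decide) (by decide) (by decide)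
  have h03 : x₀ ≠ x₃ := freq 1 0 1 2 (by decide) (by decide) (by decide)
  have h12' : x₁ ≠ x₂ := freq 0 1 2 1 (by decide) (by decide) (by decide)
  have h13' : x₁ ≠ x₃ := freq 0 1 1 2 (by decide) (by decide) (by decide)
  have h23' : x₂ ≠ x₃ := freq 2 1 1 2 (by decide) (by decide) (by decide)
  obtain ⟨c0, c1, c2, c3⟩ := vand4 h01 h02 h03 h12' h13' h23' key
  have hsb₁ : star b₁ ≠ 0 := star_ne_zero.mpr hb₁
  have hsb₂ : star b₂ ≠ 0 := star_ne_zero.mpr hb₂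
  refine ⟨?_, ?_, ?_, ?_⟩
  · rcases mul_eq_zero.mp c1 with h | h
    · exact h
    · exact absurd h hsb₁
  · rcases mul_eq_zero.mp c0 with h | h
    · exact h
    · exact absurd h hb₁
  · rcases mul_eq_zero.mp c3 with h | h
    · exact h
    · exact absurd h hsb₂
  · rcases mul_eq_zero.mp c2 with h | h
    · exact h
    · exact absurd h hb₂
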